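/- For the logistic map ℓ_μ with μ ∈ (1,4], no two distinct nodes of the chain-recurrent set are equidistant from the critical point c = 1/2: if N_1 and N_2 are distinct equivalence classes of chain-recurrent points and ρ(N) denotes the infimum of |x - c| over x ∈ N, then ρ(N_1) ≠ ρ(N_2). -/
import Mathlib


/-- The logistic map `ℓ_μ(x) = μ x (1 - x)`. -/
def logistic (μ x : ℝ) : ℝ := μ * x * (1 - x)

/-- An `ε`-chain from `p` to `q` for `f` lying in the space `[0,1]`. -/
def EpsChain (f : ℝ → ℝ) (ε p q : ℝ) : Prop :=
  ∃ n : ℕ, 1 ≤ n ∧ ∃ x : ℕ → ℝ, x 0 = p ∧ x n = q ∧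
    (∀ i ≤ n, x i ∈ Set.Icc (0 : ℝ) 1) ∧
    ∀ i < n, |f (x i) - x (i + 1)| ≤ ε

/-- `q` is downstream from `p`. -/
def Downstream (f : ℝ → ℝ) (p q : ℝ) : Prop :=
  ∀ ε > 0, EpsChain f ε p q

/-- A point of `[0,1]` is chain-recurrent if it is downstream from itself. -/
def ChainRecurrent (f : ℝ → ℝ) (p : ℝ) : Prop :=
  p ∈ Set.Icc (0 : ℝ) 1 ∧ Downstream f p p

/-- A node: an equivalence class of chain-recurrent points under mutual
(upstream and downstream) chain reachability. -/
def IsNode (f : ℝ → ℝ) (N : Set ℝ) : Prop :=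
  ∃ p, ChainRecurrent f p ∧
    N = {q | ChainRecurrent f q ∧ Downstream f p q ∧ Downstream f q p}

/-- The minimum distance of a node from the critical point `c = 1/2`. -/
noncomputable def rho (N : Set ℝ) : ℝ := sInf ((fun x => |x - 1 / 2|) '' N)

lemma logistic_symm (μ x : ℝ) : logistic μ (1 - x) = logistic μ x := by
  unfold logistic; ring

lemma logistic_mem (μ : ℝ) (hμ : μ ∈ Set.Ioc (1:ℝ) 4) {x : ℝ}
    (hx : x ∈ Set.Icc (0:ℝ) 1) : logistic μ x ∈ Set.Icc (0:ℝ) 1 := by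
  obtain ⟨hμ1, hμ4⟩ := hμ
  obtain ⟨h0, h1⟩ := hx
  constructor
  · have : (0:ℝ) < μ := by linarith
    exact mul_nonneg (mul_nonneg (le_of_lt this) h0) (by linarith)
  · unfold logistic; nlinarith [sq_nonneg (2*x - 1)]

lemma logistic_lip (μ : ℝ) (hμ : μ ∈ Set.Ioc (1:ℝ) 4) {a b : ℝ}
    (ha : a ∈ Set.Icc (0:ℝ) 1) (hb : b ∈ Set.Icc (0:ℝ) 1) :
    |logistic μ a - logistic μ b| ≤ 4 * |a - b| := by
  obtain ⟨hμ1, hμ4⟩ := hμ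
  have h : logistic μ a - logistic μ b = μ * (a - b) * (1 - a - b) := by
    unfold logistic; ring
  rw [h, abs_mul, abs_mul]
  have h1 : |1 - a - b| ≤ 1 := by
    rw [abs_le]; constructor <;> [skip; skip] <;>
      · have := ha.1; have := ha.2; have := hb.1; have := hb.2; linarith
  have h2 : |μ| ≤ 4 := by rw [abs_le]; constructor <;> linarith
  have h3 : (0:ℝ) ≤ |a - b| := abs_nonneg _
  calc |μ| * |a - b| * |1 - a - b| ≤ |μ| * |a - b| * 1 :=
        mul_le_mul_of_nonneg_left h1 (mul_nonneg (abs_nonneg μ) h3)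
    _ = |μ| * |a - b| := by ring
    _ ≤ 4 * |a - b| := mul_le_mul_of_nonneg_right h2 h3

lemma EpsChain.trans {f : ℝ → ℝ} {ε p q r : ℝ} (h1 : EpsChain f ε p q)
    (h2 : EpsChain f ε q r) : EpsChain f ε p r := by
  obtain ⟨n, hn, x, hx0, hxn, hxm, hxs⟩ := h1
  obtain ⟨m, hm, y, hy0, hym, hymem, hys⟩ := h2
  refine ⟨n + m, by omega, fun i => if i ≤ n then x i else y (i - n), ?_, ?_, ?_, ?_⟩
  · simp [hx0]
  · have : ¬ (n + m ≤ n) := by omega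
    simp [this, hym]
  · intro i hi
    by_cases h : i ≤ n
    · simpa [h] using hxm i h
    · have : i - n ≤ m := by omega
      simpa [h] using hymem _ this
  · intro i hi
    by_cases h : i + 1 ≤ n
    · have h' : i ≤ n := by omega
      simpa [h, h'] using hxs i (by omega)
    · by_cases h' : i ≤ n
      · have hin : i = n := by omega
        subst hin
        have e1 : i + 1 - i = 1 := by omega
        simp only [if_pos (le_refl i), if_neg h, e1, hxn, ← hy0]
        exact hys 0 (by omega)
      · have h1' : i - n + 1 = i + 1 - n := by omega
        simp only [h, h', if_false]
        rw [← h1']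
        exact hys (i - n) (by omega)

lemma Downstream.trans {f : ℝ → ℝ} {p q r : ℝ} (h1 : Downstream f p q)
    (h2 : Downstream f q r) : Downstream f p r :=
  fun ε hε => (h1 ε hε).trans (h2 ε hε)

lemma downstream_step {f : ℝ → ℝ} {q : ℝ} (hq : q ∈ Set.Icc (0:ℝ) 1)
    (hfq : f q ∈ Set.Icc (0:ℝ) 1) : Downstream f q (f q) := by
  intro ε hε
  refine ⟨1, le_refl _, fun i => if i = 0 then q else f q, by simp, by simp, ?_, ?_⟩
  · intro i _; by_cases h : i = 0 <;> simp [h, hq, hfq]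
  · intro i hi
    have : i = 0 := by omega
    simp [this, le_of_lt hε]

lemma downstream_image (μ : ℝ) (hμ : μ ∈ Set.Ioc (1:ℝ) 4) {q : ℝ}
    (hq : ChainRecurrent (logistic μ) q) :
    Downstream (logistic μ) (logistic μ q) q := by
  intro ε hε
  have hδ : (0:ℝ) < ε/8 := by linarith
  have hqI : q ∈ Set.Icc (0:ℝ) 1 := hq.1
  have hfqI : logistic μ q ∈ Set.Icc (0:ℝ) 1 := logistic_mem μ hμ hqI
  obtain ⟨n, hn, x, hx0, hxn, hmem, hstep⟩ := hq.2 (ε/8) hδ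
  rcases eq_or_lt_of_le hn with hn1 | hn2
  · -- n = 1 : short chain q → q; use chain (f q), q
    have hn1' : n = 1 := hn1.symm
    subst hn1'
    refine ⟨1, le_refl _, fun i => if i = 0 then logistic μ q else q, by simp, by simp, ?_, ?_⟩
    · intro i _; by_cases h : i = 0 <;> simp [h, hqI, hfqI]
    · intro i hi
      have hi0 : i = 0 := by omega
      subst hi0
      simp only [if_pos rfl, if_neg one_ne_zero]
      have h1 : |logistic μ q - q| ≤ ε/8 := by
        simpa [hx0, hxn] using hstep 0 (by omega)
      have h2 : |logistic μ (logistic μ q) - logistic μ q| ≤ 4 * |logistic μ q - q| :=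
        logistic_lip μ hμ hfqI hqI
      calc |logistic μ (logistic μ q) - q|
          ≤ |logistic μ (logistic μ q) - logistic μ q| + |logistic μ q - q| :=
            abs_sub_le _ _ _
        _ ≤ ε := by linarith
  · -- n ≥ 2 : chain (f q), x 2, x 3, ..., x n
    refine ⟨n - 1, by omega, fun i => if i = 0 then logistic μ q else x (i+1), by simp, ?_, ?_, ?_⟩
    · have h0 : n - 1 ≠ 0 := by omega
      have h1 : n - 1 + 1 = n := by omega
      simp only [if_neg h0, h1, hxn]
    · intro i hi
      by_cases h : i = 0
      · simp [h, hfqI]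
      · simp only [if_neg h]; exact hmem (i+1) (by omega)
    · intro i hi
      by_cases h : i = 0
      · subst h
        simp only [if_pos rfl, if_neg (by omega : ¬ (0:ℕ) + 1 = 0)]
        have h0 : |logistic μ q - x 1| ≤ ε/8 := by
          simpa [hx0] using hstep 0 (by omega)
        have h1 : |logistic μ (x 1) - x (0+1+1)| ≤ ε/8 := by
          simpa using hstep 1 (by omega)
        have h2 : |logistic μ (logistic μ q) - logistic μ (x 1)| ≤ 4 * |logistic μ q - x 1| :=
          logistic_lip μ hμ hfqI (hmem 1 (by omega))
        calc |logistic μ (logistic μ q) - x (0+1+1)|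
            ≤ |logistic μ (logistic μ q) - logistic μ (x 1)| + |logistic μ (x 1) - x (0+1+1)| :=
              abs_sub_le _ _ _
          _ ≤ ε := by linarith
      · simp only [if_neg h, if_neg (by omega : ¬ i + 1 = 0)]
        exact (hstep (i+1) (by omega)).trans (by linarith)

lemma node_sub_Icc {f : ℝ → ℝ} {N : Set ℝ} (h : IsNode f N) :
    N ⊆ Set.Icc (0:ℝ) 1 := by
  obtain ⟨p, _, rfl⟩ := h
  intro q hq
  exact hq.1.1

lemma node_nonempty {f : ℝ → ℝ} {N : Set ℝ} (h : IsNode f N) : N.Nonempty := by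
  obtain ⟨p, hp, rfl⟩ := h
  exact ⟨p, hp, hp.2, hp.2⟩

lemma node_forward (μ : ℝ) (hμ : μ ∈ Set.Ioc (1:ℝ) 4) {N : Set ℝ}
    (h : IsNode (logistic μ) N) {q : ℝ} (hq : q ∈ N) : logistic μ q ∈ N := by
  obtain ⟨p, hp, rfl⟩ := h
  obtain ⟨hcr, hpq, hqp⟩ := hq
  have hqI := hcr.1
  have hfqI := logistic_mem μ hμ hqI
  have hstep : Downstream (logistic μ) q (logistic μ q) := downstream_step hqI hfqI
  have hback : Downstream (logistic μ) (logistic μ q) q := downstream_image μ hμ hcr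
  exact ⟨⟨hfqI, hback.trans hstep⟩, hpq.trans hstep, hback.trans hqp⟩

lemma node_eq_of_mem {f : ℝ → ℝ} {N₁ N₂ : Set ℝ} (h₁ : IsNode f N₁)
    (h₂ : IsNode f N₂) {q : ℝ} (hq1 : q ∈ N₁) (hq2 : q ∈ N₂) : N₁ = N₂ := by
  obtain ⟨p₁, hp₁, rfl⟩ := h₁
  obtain ⟨p₂, hp₂, rfl⟩ := h₂
  obtain ⟨_, h1q, hq1'⟩ := hq1
  obtain ⟨_, h2q, hq2'⟩ := hq2
  have h12 : Downstream f p₁ p₂ := h1q.trans hq2'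
  have h21 : Downstream f p₂ p₁ := h2q.trans hq1'
  ext z
  constructor
  · rintro ⟨hcr, ha, hb⟩
    exact ⟨hcr, h21.trans ha, hb.trans h12⟩
  · rintro ⟨hcr, ha, hb⟩
    exact ⟨hcr, h12.trans ha, hb.trans h21⟩

lemma node_closed (μ : ℝ) (hμ : μ ∈ Set.Ioc (1:ℝ) 4) {N : Set ℝ}
    (h : IsNode (logistic μ) N) : IsClosed N := by
  obtain ⟨p, hp, hNdef⟩ := h
  have hsub : N ⊆ Set.Icc (0:ℝ) 1 := node_sub_Icc ⟨p, hp, hNdef⟩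
  apply isClosed_of_closure_subset
  intro q hqcl
  have hqI : q ∈ Set.Icc (0:ℝ) 1 := closure_minimal hsub isClosed_Icc hqcl
  have happrox : ∀ δ > 0, ∃ q' ∈ N, |q - q'| < δ := by
    intro δ hδ
    rcases Metric.mem_closure_iff.1 hqcl δ hδ with ⟨q', hq', hd⟩
    exact ⟨q', hq', by rwa [Real.dist_eq] at hd⟩
  have hdown : Downstream (logistic μ) p q := by
    intro ε hε
    obtain ⟨q', hq'N, hq'c⟩ := happrox (ε/2) (by linarith)
    rw [hNdef] at hq'N
    obtain ⟨n, hn, x, hx0, hxn, hmem, hstep⟩ := hq'N.2.1 (ε/2) (by linarith)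
    refine ⟨n, hn, fun i => if i = n then q else x i, ?_, by simp, ?_, ?_⟩
    · simp only [if_neg (by omega : ¬ (0:ℕ) = n)]; exact hx0
    · intro i hi
      by_cases hh : i = n
      · simp [hh, hqI]
      · simp only [if_neg hh]; exact hmem i hi
    · intro i hi
      simp only [if_neg (by omega : ¬ i = n)]
      by_cases hh : i + 1 = n
      · simp only [if_pos hh]
        have h1 := hstep i hi
        rw [hh, hxn] at h1
        have h2 : |q' - q| < ε/2 := by rwa [abs_sub_comm]
        calc |logistic μ (x i) - q|
            ≤ |logistic μ (x i) - q'| + |q' - q| := abs_sub_le _ _ _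
          _ ≤ ε := by linarith
      · simp only [if_neg hh]
        exact (hstep i hi).trans (by linarith)
  have hup : Downstream (logistic μ) q p := by
    intro ε hε
    have hδ : (0:ℝ) < ε/8 := by linarith
    obtain ⟨q', hq'N, hq'c⟩ := happrox (ε/8) hδ
    have hq'I : q' ∈ Set.Icc (0:ℝ) 1 := hsub hq'N
    rw [hNdef] at hq'N
    obtain ⟨n, hn, x, hx0, hxn, hmem, hstep⟩ := hq'N.2.2 (ε/8) hδ
    refine ⟨n, hn, fun i => if i = 0 then q else x i, by simp, ?_, ?_, ?_⟩
    · simp only [if_neg (by omega : ¬ n = 0)]; exact hxn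
    · intro i hi
      by_cases hh : i = 0
      · simp [hh, hqI]
      · simp only [if_neg hh]; exact hmem i hi
    · intro i hi
      simp only [if_neg (by omega : ¬ i + 1 = 0)]
      by_cases hh : i = 0
      · subst hh
        simp only [if_pos rfl]
        have h0 : |logistic μ q - logistic μ q'| ≤ 4 * |q - q'| :=
          logistic_lip μ hμ hqI hq'I
        have h1 := hstep 0 hi
        rw [hx0] at h1
        calc |logistic μ q - x (0+1)|
            ≤ |logistic μ q - logistic μ q'| + |logistic μ q' - x (0+1)| :=
              abs_sub_le _ _ _
          _ ≤ ε := by linarith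
      · simp only [if_neg hh]
        exact (hstep i hi).trans (by linarith)
  rw [hNdef]
  exact ⟨⟨hqI, hup.trans hdown⟩, hdown, hup⟩

lemma rho_attained {N : Set ℝ} (hne : N.Nonempty) (hcl : IsClosed N)
    (hsub : N ⊆ Set.Icc (0:ℝ) 1) : ∃ y ∈ N, |y - 1/2| = rho N := by
  have hcomp : IsCompact N := (isCompact_Icc).of_isClosed_subset hcl hsub
  have hcont : ContinuousOn (fun x : ℝ => |x - 1/2|) N :=
    (continuous_abs.comp (continuous_id.sub continuous_const)).continuousOn
  obtain ⟨y, hyN, hymin⟩ := hcomp.exists_isMinOn hne hcont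
  refine ⟨y, hyN, ?_⟩
  apply le_antisymm
  · apply le_csInf (hne.image _)
    rintro b ⟨z, hz, rfl⟩
    exact hymin hz
  · exact csInf_le ⟨0, by rintro b ⟨z, _, rfl⟩; exact abs_nonneg _⟩ ⟨y, hyN, rfl⟩

/-- For the logistic map with `μ ∈ (1,4]`, no two distinct nodes are
equidistant from the critical point `c = 1/2`. -/
theorem nodes_not_equidistant (μ : ℝ) (hμ : μ ∈ Set.Ioc (1 : ℝ) 4)
    (N₁ N₂ : Set ℝ) (h₁ : IsNode (logistic μ) N₁) (h₂ : IsNode (logistic μ) N₂)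
    (hne : N₁ ≠ N₂) : rho N₁ ≠ rho N₂ := by
  intro heq
  have hsub₁ := node_sub_Icc h₁
  have hsub₂ := node_sub_Icc h₂
  obtain ⟨y₁, hy₁, he₁⟩ := rho_attained (node_nonempty h₁) (node_closed μ hμ h₁) hsub₁
  obtain ⟨y₂, hy₂, he₂⟩ := rho_attained (node_nonempty h₂) (node_closed μ hμ h₂) hsub₂
  have habs : |y₁ - 1/2| = |y₂ - 1/2| := by rw [he₁, he₂, heq]
  rcases abs_eq_abs.1 habs with hc | hc
  · have hyy : y₁ = y₂ := by linarith
    exact hne (node_eq_of_mem h₁ h₂ hy₁ (by rw [hyy]; exact hy₂))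
  · have h12 : y₂ = 1 - y₁ := by linarith
    have hz₁ : logistic μ y₁ ∈ N₁ := node_forward μ hμ h₁ hy₁
    have hz₂ : logistic μ y₂ ∈ N₂ := node_forward μ hμ h₂ hy₂
    have hzz : logistic μ y₂ = logistic μ y₁ := by rw [h12, logistic_symm]
    rw [hzz] at hz₂
    exact hne (node_eq_of_mem h₁ h₂ hz₁ hz₂)
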